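/- arXiv:2402.04869 — 6 statements merged into one kernel-verified Lean document; each statement's English description precedes it below -/
import Mathlib

section
/- Let S and A be finite nonempty sets, let T : S × A × S → ℝ be a transition kernel, let π and π' be policies, and let P_π and P_{π'} be the induced transition matrices. Then for every function h : S → ℝ with nonnegative values, Σ_{s'∈S} Σ_{s∈S} |P_π(s'|s) − P_{π'}(s'|s)|·h(s) ≤ 2·Σ_{s∈S} h(s)·D_TV(π(·|s), π'(·|s)). -/
open Finset

/-- For two policies `π, π'` and a transition kernel `T`, with induced transition
matrices `P_π(s'|s) = ∑ₐ T(s'|s,a) π(a|s)`, and any nonnegative `h : S → ℝ`,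
`∑_{s'} ∑_s |P_π(s'|s) - P_{π'}(s'|s)| h(s) ≤ 2 ∑_s h(s) D_TV(π(·|s), π'(·|s))`. -/
theorem kernel_difference_bound {S A : Type*} [Fintype S] [Nonempty S] [Fintype A] [Nonempty A]
    (T : S → A → S → ℝ)
    (hT0 : ∀ s a s', 0 ≤ T s a s')
    (hT1 : ∀ s a, ∑ s', T s a s' = 1)
    (π π' : S → A → ℝ)
    (hπ0 : ∀ s a, 0 ≤ π s a) (hπ1 : ∀ s, ∑ a, π s a = 1)
    (hπ'0 : ∀ s a, 0 ≤ π' s a) (hπ'1 : ∀ s, ∑ a, π' s a = 1) :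
    ∀ h : S → ℝ, (∀ s, 0 ≤ h s) →
      ∑ s', ∑ s, |(∑ a, T s a s' * π s a) - (∑ a, T s a s' * π' s a)| * h s ≤
        2 * ∑ s, h s * ((1 / 2) * ∑ a, |π s a - π' s a|) := by
  intro h h0
  have key : ∀ s' s, |(∑ a, T s a s' * π s a) - (∑ a, T s a s' * π' s a)| * h s ≤
      (∑ a, T s a s' * |π s a - π' s a|) * h s := by
    intro s' s
    apply mul_le_mul_of_nonneg_right _ (h0 s)
    rw [← Finset.sum_sub_distrib]
    calc |∑ a, (T s a s' * π s a - T s a s' * π' s a)|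
        ≤ ∑ a, |T s a s' * π s a - T s a s' * π' s a| := Finset.abs_sum_le_sum_abs _ _
      _ = ∑ a, T s a s' * |π s a - π' s a| := by
          refine Finset.sum_congr rfl fun a _ => ?_
          rw [← mul_sub, abs_mul, abs_of_nonneg (hT0 s a s')]
  calc ∑ s', ∑ s, |(∑ a, T s a s' * π s a) - (∑ a, T s a s' * π' s a)| * h s
      ≤ ∑ s', ∑ s, (∑ a, T s a s' * |π s a - π' s a|) * h s := by
        exact Finset.sum_le_sum fun s' _ => Finset.sum_le_sum fun s _ => key s' s
    _ = ∑ s, ∑ a, (∑ s', T s a s') * |π s a - π' s a| * h s := by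
        rw [Finset.sum_comm]
        refine Finset.sum_congr rfl fun s _ => ?_
        simp only [Finset.sum_mul, mul_assoc]
        rw [Finset.sum_comm]
    _ = ∑ s, h s * ∑ a, |π s a - π' s a| := by
        refine Finset.sum_congr rfl fun s _ => ?_
        rw [Finset.mul_sum]
        refine Finset.sum_congr rfl fun a _ => ?_
        rw [hT1 s a]; ring
    _ = 2 * ∑ s, h s * ((1 / 2) * ∑ a, |π s a - π' s a|) := by
        rw [Finset.mul_sum]; exact Finset.sum_congr rfl fun s _ => by ring
end

section
/- Let S and A be finite nonempty sets, let T : S × A × S → ℝ be a transition kernel, let π and π' be policies with induced transition matrices P_π and P_{π'}, let γ ∈ [0,1), and let h₀ be a probability vector on S. Let h_π = (1−γ)·Σ_{t=0}^∞ γ^t P_π^t h₀ and h_{π'} = (1−γ)·Σ_{t=0}^∞ γ^t P_{π'}^t h₀ be the discounted state occupancy distributions. Then D_TV(h_π, h_{π'}) ≤ (1/(1−γ))·Σ_{s∈S} h_{π'}(s)·D_TV(π(·|s), π'(·|s)). -/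
open Finset

section Aux

set_option linter.unusedSectionVars false

variable {S : Type*} [Fintype S] [DecidableEq S]

/-- Entrywise nonnegativity and column-stochasticity is preserved by powers. -/
lemma col_stoch_pow (P : Matrix S S ℝ) (h0 : ∀ s' s, 0 ≤ P s' s)
    (h1 : ∀ s, ∑ s', P s' s = 1) :
    ∀ t : ℕ, (∀ s' s, 0 ≤ (P ^ t) s' s) ∧ (∀ s, ∑ s', (P ^ t) s' s = 1) := by
  intro t
  induction t with
  | zero =>
    constructor
    · intro s' s
      by_cases h : s' = s <;> simp [Matrix.one_apply, h]
    · intro s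
      simp [Matrix.one_apply, Finset.sum_ite_eq]
  | succ n ih =>
    obtain ⟨ih0, ih1⟩ := ih
    have hmul : ∀ s' s, (P ^ (n+1)) s' s = ∑ u, (P ^ n) s' u * P u s := by
      intro s' s
      rw [pow_succ]
      rfl
    constructor
    · intro s' s
      rw [hmul]
      exact Finset.sum_nonneg fun u _ => mul_nonneg (ih0 s' u) (h0 u s)
    · intro s
      simp_rw [hmul]
      rw [Finset.sum_comm]
      have : ∀ u, ∑ s', (P ^ n) s' u * P u s = P u s := by
        intro u
        rw [← Finset.sum_mul, ih1 u, one_mul]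
      simp_rw [this]
      exact h1 s

/-- A column-stochastic matrix maps probability-bounded nonneg vectors into `[0,1]`. -/
lemma mulVec_prob_bounds (P : Matrix S S ℝ) (h0 : ∀ s' s, 0 ≤ P s' s)
    (h1 : ∀ s, ∑ s', P s' s = 1) (x : S → ℝ) (hx0 : ∀ s, 0 ≤ x s) (hx1 : ∑ s, x s = 1) :
    ∀ s, 0 ≤ P.mulVec x s ∧ P.mulVec x s ≤ 1 := by
  intro s
  have hle : ∀ s' s, P s' s ≤ 1 := by
    intro s' s
    calc P s' s ≤ ∑ u, P u s := Finset.single_le_sum (fun u _ => h0 u s) (Finset.mem_univ s')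
    _ = 1 := h1 s
  constructor
  · exact Finset.sum_nonneg fun u _ => mul_nonneg (h0 s u) (hx0 u)
  · calc P.mulVec x s = ∑ u, P s u * x u := rfl
    _ ≤ ∑ u, 1 * x u := Finset.sum_le_sum fun u _ => mul_le_mul_of_nonneg_right (hle s u) (hx0 u)
    _ = 1 := by simp [hx1]

/-- ℓ¹ contraction for column-stochastic matrices. -/
lemma mulVec_l1_contract (P : Matrix S S ℝ) (h0 : ∀ s' s, 0 ≤ P s' s)
    (h1 : ∀ s, ∑ s', P s' s = 1) (x : S → ℝ) :
    ∑ s, |P.mulVec x s| ≤ ∑ s, |x s| := by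
  calc ∑ s, |P.mulVec x s| = ∑ s, |∑ u, P s u * x u| := rfl
  _ ≤ ∑ s, ∑ u, |P s u * x u| :=
      Finset.sum_le_sum fun s _ => Finset.abs_sum_le_sum_abs _ _
  _ = ∑ u, ∑ s, P s u * |x u| := by
      rw [Finset.sum_comm]
      congr 1; ext u; congr 1; ext s
      rw [abs_mul, abs_of_nonneg (h0 s u)]
  _ = ∑ u, |x u| := by
      congr 1; ext u
      rw [← Finset.sum_mul, h1 u, one_mul]

end Aux

/-- **Lemma B2 (state distribution discrepancy).**
For policies `π, π'` with induced transition matrices `Pπ, Pπ'` and discounted state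
occupancies `hπ, hπ'` (discount `γ ∈ [0,1)`, initial probability vector `h₀`),
`D_TV(hπ, hπ') ≤ (1/(1-γ)) ∑_s hπ'(s) D_TV(π(·|s), π'(·|s))`. -/
theorem state_distribution_discrepancy {S A : Type*}
    [Fintype S] [Nonempty S] [DecidableEq S] [Fintype A] [Nonempty A]
    (T : S → A → S → ℝ)
    (hT0 : ∀ s a s', 0 ≤ T s a s')
    (hT1 : ∀ s a, ∑ s', T s a s' = 1)
    (π π' : S → A → ℝ)
    (hπ0 : ∀ s a, 0 ≤ π s a) (hπ1 : ∀ s, ∑ a, π s a = 1)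
    (hπ'0 : ∀ s a, 0 ≤ π' s a) (hπ'1 : ∀ s, ∑ a, π' s a = 1)
    (Pπ Pπ' : Matrix S S ℝ)
    (hPπ : ∀ s' s, Pπ s' s = ∑ a, T s a s' * π s a)
    (hPπ' : ∀ s' s, Pπ' s' s = ∑ a, T s a s' * π' s a)
    (γ : ℝ) (hγ : γ ∈ Set.Ico (0 : ℝ) 1)
    (h₀ : S → ℝ) (hh₀0 : ∀ s, 0 ≤ h₀ s) (hh₀1 : ∑ s, h₀ s = 1)
    (hπocc hπ'occ : S → ℝ)
    (hocc : ∀ s, hπocc s = (1 - γ) * ∑' t : ℕ, γ ^ t * (Pπ ^ t).mulVec h₀ s)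
    (hocc' : ∀ s, hπ'occ s = (1 - γ) * ∑' t : ℕ, γ ^ t * (Pπ' ^ t).mulVec h₀ s) :
    (1 / 2) * ∑ s, |hπocc s - hπ'occ s| ≤
      (1 / (1 - γ)) * ∑ s, hπ'occ s * ((1 / 2) * ∑ a, |π s a - π' s a|) := by
  obtain ⟨hγ0, hγ1⟩ := hγ
  have h1γ : 0 < 1 - γ := by linarith
  -- stochasticity of Pπ and Pπ'
  have hPπ0 : ∀ s' s, 0 ≤ Pπ s' s := fun s' s => by
    rw [hPπ]; exact Finset.sum_nonneg fun a _ => mul_nonneg (hT0 s a s') (hπ0 s a)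
  have hPπ1 : ∀ s, ∑ s', Pπ s' s = 1 := fun s => by
    simp_rw [hPπ]
    rw [Finset.sum_comm]
    have : ∀ a, ∑ s', T s a s' * π s a = π s a := fun a => by
      rw [← Finset.sum_mul, hT1 s a, one_mul]
    simp_rw [this]; exact hπ1 s
  have hPπ'0 : ∀ s' s, 0 ≤ Pπ' s' s := fun s' s => by
    rw [hPπ']; exact Finset.sum_nonneg fun a _ => mul_nonneg (hT0 s a s') (hπ'0 s a)
  have hPπ'1 : ∀ s, ∑ s', Pπ' s' s = 1 := fun s => by
    simp_rw [hPπ']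
    rw [Finset.sum_comm]
    have : ∀ a, ∑ s', T s a s' * π' s a = π' s a := fun a => by
      rw [← Finset.sum_mul, hT1 s a, one_mul]
    simp_rw [this]; exact hπ'1 s
  -- key generic facts about the occupancy of a stochastic matrix
  have key : ∀ (P : Matrix S S ℝ), (∀ s' s, 0 ≤ P s' s) → (∀ s, ∑ s', P s' s = 1) →
      ∀ (h : S → ℝ), (∀ s, h s = (1 - γ) * ∑' t : ℕ, γ ^ t * (P ^ t).mulVec h₀ s) →
      (∀ s, 0 ≤ h s) ∧ (∀ s, h s = (1 - γ) * h₀ s + γ * P.mulVec h s) := by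
    intro P h0 h1 h hh
    have hpow := col_stoch_pow P h0 h1
    have hbound : ∀ (t : ℕ) (s : S), 0 ≤ (P ^ t).mulVec h₀ s ∧ (P ^ t).mulVec h₀ s ≤ 1 :=
      fun t => mulVec_prob_bounds (P ^ t) (hpow t).1 (hpow t).2 h₀ hh₀0 hh₀1
    have hsumm : ∀ s, Summable (fun t : ℕ => γ ^ t * (P ^ t).mulVec h₀ s) := by
      intro s
      apply Summable.of_nonneg_of_le
        (fun t => mul_nonneg (pow_nonneg hγ0 t) (hbound t s).1)
        (fun t => ?_) (summable_geometric_of_lt_one hγ0 hγ1)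
      calc γ ^ t * (P ^ t).mulVec h₀ s ≤ γ ^ t * 1 :=
            mul_le_mul_of_nonneg_left (hbound t s).2 (pow_nonneg hγ0 t)
      _ = γ ^ t := mul_one _
    refine ⟨fun s => ?_, fun s => ?_⟩
    · rw [hh]
      exact mul_nonneg (le_of_lt h1γ)
        (tsum_nonneg fun t => mul_nonneg (pow_nonneg hγ0 t) (hbound t s).1)
    · have step : P.mulVec h s = (1 - γ) * ∑' t : ℕ, γ ^ t * (P ^ (t+1)).mulVec h₀ s := by
        have : P.mulVec h s = ∑ u, P s u * h u := rfl
        rw [this]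
        have expand : ∀ u, P s u * h u =
            ∑' t : ℕ, (1 - γ) * (γ ^ t * (P s u * (P ^ t).mulVec h₀ u)) := by
          intro u
          rw [hh u, ← tsum_mul_left, ← tsum_mul_left]
          congr 1; ext t; ring
        simp_rw [expand]
        have hsum2 : ∀ u ∈ Finset.univ (α := S),
            Summable (fun t : ℕ => (1 - γ) * (γ ^ t * (P s u * (P ^ t).mulVec h₀ u))) := by
          intro u _
          apply Summable.mul_left
          apply Summable.of_nonneg_of_le
            (fun t => mul_nonneg (pow_nonneg hγ0 t)
              (mul_nonneg (h0 s u) (hbound t u).1))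
            (fun t => ?_) (summable_geometric_of_lt_one hγ0 hγ1)
          have hPle : P s u ≤ 1 := by
            calc P s u ≤ ∑ v, P v u := Finset.single_le_sum (fun v _ => h0 v u) (Finset.mem_univ s)
            _ = 1 := h1 u
          calc γ ^ t * (P s u * (P ^ t).mulVec h₀ u) ≤ γ ^ t * (1 * 1) := by
                apply mul_le_mul_of_nonneg_left _ (pow_nonneg hγ0 t)
                exact mul_le_mul hPle (hbound t u).2 (hbound t u).1 zero_le_one
          _ = γ ^ t := by ring
        rw [← Summable.tsum_finsetSum hsum2, ← tsum_mul_left]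
        congr 1; ext t
        have e1 : ∑ u, (1 - γ) * (γ ^ t * (P s u * (P ^ t).mulVec h₀ u)) =
            (1 - γ) * (γ ^ t * ∑ u, P s u * (P ^ t).mulVec h₀ u) := by
          rw [Finset.mul_sum, Finset.mul_sum]
        rw [e1]
        have e2 : ∑ u, P s u * (P ^ t).mulVec h₀ u = (P ^ (t+1)).mulVec h₀ s := by
          have h2 : P.mulVec ((P ^ t).mulVec h₀) s = ∑ u, P s u * (P ^ t).mulVec h₀ u := rfl
          rw [← h2, Matrix.mulVec_mulVec, ← pow_succ']
        rw [e2]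
      have h00 : γ ^ 0 * (P ^ 0).mulVec h₀ s = h₀ s := by
        simp [Matrix.one_mulVec]
      have tail : ∑' t : ℕ, γ ^ (t+1) * (P ^ (t+1)).mulVec h₀ s
          = γ * ∑' t : ℕ, γ ^ t * (P ^ (t+1)).mulVec h₀ s := by
        rw [← tsum_mul_left]
        congr 1; ext t; ring
      have split : h s = (1 - γ) * h₀ s + γ * ((1 - γ) * ∑' t : ℕ, γ ^ t * (P ^ (t+1)).mulVec h₀ s) := by
        rw [hh s, Summable.tsum_eq_zero_add (hsumm s), h00, tail]
        ring
      rw [split, step]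
  obtain ⟨hocc_nn, hfix⟩ := key Pπ hPπ0 hPπ1 hπocc hocc
  obtain ⟨hocc'_nn, hfix'⟩ := key Pπ' hPπ'0 hPπ'1 hπ'occ hocc'
  -- error recursion
  set e : S → ℝ := fun s => hπocc s - hπ'occ s with he
  have herec : ∀ s, e s = γ * Pπ.mulVec e s + γ * ((Pπ - Pπ').mulVec hπ'occ s) := by
    intro s
    have h1 : Pπ.mulVec e s = ∑ u, Pπ s u * (hπocc u - hπ'occ u) := rfl
    have h2 : (Pπ - Pπ').mulVec hπ'occ s = ∑ u, (Pπ s u - Pπ' s u) * hπ'occ u := rfl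
    have h3 : Pπ.mulVec hπocc s = ∑ u, Pπ s u * hπocc u := rfl
    have h4 : Pπ'.mulVec hπ'occ s = ∑ u, Pπ' s u * hπ'occ u := rfl
    have : e s = γ * Pπ.mulVec hπocc s - γ * Pπ'.mulVec hπ'occ s := by
      simp only [he]
      rw [hfix s, hfix' s]; ring
    rw [this, h1, h2, h3, h4, Finset.mul_sum, Finset.mul_sum, Finset.mul_sum, Finset.mul_sum,
      ← Finset.sum_sub_distrib, ← Finset.sum_add_distrib]
    congr 1; ext u; ring
  -- total variation of columns of Pπ - Pπ' bounded by policy TV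
  have hcol : ∀ u, ∑ s, |Pπ s u - Pπ' s u| ≤ ∑ a, |π u a - π' u a| := by
    intro u
    have : ∀ s, Pπ s u - Pπ' s u = ∑ a, T u a s * (π u a - π' u a) := by
      intro s
      rw [hPπ, hPπ', ← Finset.sum_sub_distrib]
      congr 1; ext a; ring
    calc ∑ s, |Pπ s u - Pπ' s u| = ∑ s, |∑ a, T u a s * (π u a - π' u a)| := by simp_rw [this]
    _ ≤ ∑ s, ∑ a, |T u a s * (π u a - π' u a)| :=
        Finset.sum_le_sum fun s _ => Finset.abs_sum_le_sum_abs _ _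
    _ = ∑ a, ∑ s, T u a s * |π u a - π' u a| := by
        rw [Finset.sum_comm]
        congr 1; ext a; congr 1; ext s
        rw [abs_mul, abs_of_nonneg (hT0 u a s)]
    _ = ∑ a, |π u a - π' u a| := by
        congr 1; ext a
        rw [← Finset.sum_mul, hT1 u a, one_mul]
  -- bound the perturbation term
  have hpert : ∑ s, |(Pπ - Pπ').mulVec hπ'occ s| ≤ ∑ u, hπ'occ u * ∑ a, |π u a - π' u a| := by
    calc ∑ s, |(Pπ - Pπ').mulVec hπ'occ s| = ∑ s, |∑ u, (Pπ s u - Pπ' s u) * hπ'occ u| := rfl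
    _ ≤ ∑ s, ∑ u, |(Pπ s u - Pπ' s u) * hπ'occ u| :=
        Finset.sum_le_sum fun s _ => Finset.abs_sum_le_sum_abs _ _
    _ = ∑ u, hπ'occ u * ∑ s, |Pπ s u - Pπ' s u| := by
        rw [Finset.sum_comm]
        congr 1; ext u
        rw [Finset.mul_sum]
        congr 1; ext s
        rw [abs_mul, abs_of_nonneg (hocc'_nn u)]; ring
    _ ≤ ∑ u, hπ'occ u * ∑ a, |π u a - π' u a| :=
        Finset.sum_le_sum fun u _ => mul_le_mul_of_nonneg_left (hcol u) (hocc'_nn u)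
  -- main ℓ¹ estimate
  set E : ℝ := ∑ s, |e s| with hE
  set C : ℝ := ∑ u, hπ'occ u * ∑ a, |π u a - π' u a| with hC
  have hEbound : E ≤ γ * E + γ * C := by
    calc E = ∑ s, |γ * Pπ.mulVec e s + γ * ((Pπ - Pπ').mulVec hπ'occ s)| := by
          rw [hE]; congr 1; ext s; rw [herec s]
    _ ≤ ∑ s, (|γ * Pπ.mulVec e s| + |γ * ((Pπ - Pπ').mulVec hπ'occ s)|) :=
        Finset.sum_le_sum fun s _ => abs_add_le _ _
    _ = γ * ∑ s, |Pπ.mulVec e s| + γ * ∑ s, |(Pπ - Pπ').mulVec hπ'occ s| := by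
        rw [Finset.sum_add_distrib, Finset.mul_sum, Finset.mul_sum]
        congr 1 <;> (congr 1; ext s; rw [abs_mul, abs_of_nonneg hγ0])
    _ ≤ γ * E + γ * C := by
        apply add_le_add
        · exact mul_le_mul_of_nonneg_left (mulVec_l1_contract Pπ hPπ0 hPπ1 e) hγ0
        · exact mul_le_mul_of_nonneg_left hpert hγ0
  have hCnn : 0 ≤ C := Finset.sum_nonneg fun u _ => mul_nonneg (hocc'_nn u)
    (Finset.sum_nonneg fun a _ => abs_nonneg _)
  have hEfin : E ≤ (1 / (1 - γ)) * C := by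
    rw [div_mul_eq_mul_div, le_div_iff₀ h1γ]
    nlinarith
  have hRHS : (1 / (1 - γ)) * ∑ s, hπ'occ s * ((1 / 2) * ∑ a, |π s a - π' s a|) =
      (1 / 2) * ((1 / (1 - γ)) * C) := by
    rw [hC, Finset.mul_sum, Finset.mul_sum, Finset.mul_sum]
    congr 1; ext s; ring
  rw [hRHS]
  exact mul_le_mul_of_nonneg_left hEfin (by norm_num)
end

section
/- Let S and A be finite nonempty sets, let h and h' be probability vectors on S, and let π and π' be policies. Then (1/2)·Σ_{s∈S} Σ_{a∈A} |π'(a|s)·h'(s) − π(a|s)·h(s)| ≤ Σ_{s∈S} h(s)·D_TV(π(·|s), π'(·|s)) + D_TV(h, h'). -/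
open Finset

/-- The total variation distance between the joint distributions `(s,a) ↦ π(a|s) h(s)`
and `(s,a) ↦ π'(a|s) h'(s)` is at most
`∑_s h(s) D_TV(π(·|s), π'(·|s)) + D_TV(h, h')`. -/
theorem joint_tv_bound {S A : Type*} [Fintype S] [Nonempty S] [Fintype A] [Nonempty A]
    (h h' : S → ℝ)
    (hh0 : ∀ s, 0 ≤ h s) (hh1 : ∑ s, h s = 1)
    (hh'0 : ∀ s, 0 ≤ h' s) (hh'1 : ∑ s, h' s = 1)
    (π π' : S → A → ℝ)
    (hπ0 : ∀ s a, 0 ≤ π s a) (hπ1 : ∀ s, ∑ a, π s a = 1)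
    (hπ'0 : ∀ s a, 0 ≤ π' s a) (hπ'1 : ∀ s, ∑ a, π' s a = 1) :
    (1 / 2) * ∑ s, ∑ a, |π' s a * h' s - π s a * h s| ≤
      (∑ s, h s * ((1 / 2) * ∑ a, |π s a - π' s a|)) +
        (1 / 2) * ∑ s, |h s - h' s| := by
  have key : ∀ s, ∑ a, |π' s a * h' s - π s a * h s| ≤
      h s * ∑ a, |π s a - π' s a| + |h s - h' s| := by
    intro s
    calc ∑ a, |π' s a * h' s - π s a * h s|
        ≤ ∑ a, (h s * |π s a - π' s a| + π' s a * |h s - h' s|) := by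
          apply Finset.sum_le_sum
          intro a _
          have : π' s a * h' s - π s a * h s =
              (π' s a - π s a) * h s + π' s a * (h' s - h s) := by ring
          rw [this]
          calc |(π' s a - π s a) * h s + π' s a * (h' s - h s)|
              ≤ |(π' s a - π s a) * h s| + |π' s a * (h' s - h s)| := abs_add_le _ _
            _ = h s * |π s a - π' s a| + π' s a * |h s - h' s| := by
                rw [abs_mul, abs_mul, abs_of_nonneg (hh0 s), abs_of_nonneg (hπ'0 s a),
                  abs_sub_comm (π' s a), abs_sub_comm (h' s)]
                ring
      _ = h s * ∑ a, |π s a - π' s a| + |h s - h' s| := by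
          rw [Finset.sum_add_distrib, ← Finset.mul_sum, ← Finset.sum_mul, hπ'1 s, one_mul]
  have hs : ∑ s, ∑ a, |π' s a * h' s - π s a * h s| ≤
      ∑ s, (h s * ∑ a, |π s a - π' s a| + |h s - h' s|) :=
    Finset.sum_le_sum fun s _ => key s
  rw [Finset.sum_add_distrib] at hs
  have := mul_le_mul_of_nonneg_left hs (by norm_num : (0:ℝ) ≤ 1/2)
  calc (1 / 2) * ∑ s, ∑ a, |π' s a * h' s - π s a * h s|
      ≤ (1/2) * ((∑ s, h s * ∑ a, |π s a - π' s a|) + ∑ s, |h s - h' s|) := this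
    _ = (∑ s, h s * ((1 / 2) * ∑ a, |π s a - π' s a|)) + (1 / 2) * ∑ s, |h s - h' s| := by
        rw [mul_add, Finset.mul_sum]
        congr 1
        apply Finset.sum_congr rfl
        intro s _
        ring
end

section
/- Let S and A be finite nonempty sets, let T : S × A × S → ℝ be a transition kernel, let π and π' be policies with induced transition matrices P_π and P_{π'}, let γ ∈ [0,1), and let h₀ be a probability vector on S. Let h_π and h_{π'} be the discounted state occupancy distributions and let ρ_π(s,a) = π(a|s)·h_π(s) and ρ_{π'}(s,a) = π'(a|s)·h_{π'}(s) be the discounted state-action occupancy distributions. Then D_TV(ρ_π, ρ_{π'}) ≤ (1/(1−γ))·max_{s∈S} D_TV(π(·|s), π'(·|s)). -/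
open Finset


/-- One-step L1 bound for difference of two stochastic matrix actions. -/
lemma l1_step_bound {S : Type*} [Fintype S]
    (P P' : Matrix S S ℝ)
    (hP0 : ∀ s' s, 0 ≤ P s' s)
    (hPcol : ∀ s, ∑ s', P s' s = 1)
    (c : ℝ) (hc : ∀ s, ∑ s', |P s' s - P' s' s| ≤ c)
    (v w : S → ℝ) (hw0 : ∀ s, 0 ≤ w s) (hw1 : ∑ s, w s = 1) :
    ∑ s', |P.mulVec v s' - P'.mulVec w s'| ≤ (∑ s, |v s - w s|) + c := by
  have key : ∀ s', |P.mulVec v s' - P'.mulVec w s'| ≤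
      ∑ s, (P s' s * |v s - w s| + |P s' s - P' s' s| * w s) := by
    intro s'
    have heq : P.mulVec v s' - P'.mulVec w s' =
        ∑ s, (P s' s * (v s - w s) + (P s' s - P' s' s) * w s) := by
      simp only [Matrix.mulVec, dotProduct, ← Finset.sum_sub_distrib]
      exact Finset.sum_congr rfl fun s _ => by ring
    rw [heq]
    refine (Finset.abs_sum_le_sum_abs _ _).trans (Finset.sum_le_sum fun s _ => ?_)
    refine (abs_add_le _ _).trans ?_
    rw [abs_mul, abs_mul, abs_of_nonneg (hP0 s' s), abs_of_nonneg (hw0 s)]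
  calc ∑ s', |P.mulVec v s' - P'.mulVec w s'|
      ≤ ∑ s', ∑ s, (P s' s * |v s - w s| + |P s' s - P' s' s| * w s) :=
        Finset.sum_le_sum fun s' _ => key s'
    _ = ∑ s, ((∑ s', P s' s) * |v s - w s| + (∑ s', |P s' s - P' s' s|) * w s) := by
        rw [Finset.sum_comm]
        exact Finset.sum_congr rfl fun s _ => by rw [Finset.sum_add_distrib, ← Finset.sum_mul, ← Finset.sum_mul]
    _ ≤ ∑ s, (|v s - w s| + c * w s) := by
        refine Finset.sum_le_sum fun s _ => ?_
        rw [hPcol s, one_mul]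
        exact add_le_add le_rfl (mul_le_mul_of_nonneg_right (hc s) (hw0 s))
    _ = (∑ s, |v s - w s|) + c := by
        rw [Finset.sum_add_distrib, ← Finset.mul_sum, hw1, mul_one]

/-- **Lemma B3 (state-action distribution discrepancy).**
For policies `π, π'` with discounted state occupancies `hπ, hπ'` and state-action
occupancies `ρ_π(s,a) = π(a|s) hπ(s)`, `ρ_{π'}(s,a) = π'(a|s) hπ'(s)`,
`D_TV(ρ_π, ρ_{π'}) ≤ (1/(1-γ)) maxₛ D_TV(π(·|s), π'(·|s))`. -/
theorem state_action_distribution_discrepancy {S A : Type*}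
    [Fintype S] [Nonempty S] [DecidableEq S] [Fintype A] [Nonempty A]
    (T : S → A → S → ℝ)
    (hT0 : ∀ s a s', 0 ≤ T s a s')
    (hT1 : ∀ s a, ∑ s', T s a s' = 1)
    (π π' : S → A → ℝ)
    (hπ0 : ∀ s a, 0 ≤ π s a) (hπ1 : ∀ s, ∑ a, π s a = 1)
    (hπ'0 : ∀ s a, 0 ≤ π' s a) (hπ'1 : ∀ s, ∑ a, π' s a = 1)
    (Pπ Pπ' : Matrix S S ℝ)
    (hPπ : ∀ s' s, Pπ s' s = ∑ a, T s a s' * π s a)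
    (hPπ' : ∀ s' s, Pπ' s' s = ∑ a, T s a s' * π' s a)
    (γ : ℝ) (hγ : γ ∈ Set.Ico (0 : ℝ) 1)
    (h₀ : S → ℝ) (hh₀0 : ∀ s, 0 ≤ h₀ s) (hh₀1 : ∑ s, h₀ s = 1)
    (hπocc hπ'occ : S → ℝ)
    (hocc : ∀ s, hπocc s = (1 - γ) * ∑' t : ℕ, γ ^ t * (Pπ ^ t).mulVec h₀ s)
    (hocc' : ∀ s, hπ'occ s = (1 - γ) * ∑' t : ℕ, γ ^ t * (Pπ' ^ t).mulVec h₀ s) :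
    (1 / 2) * ∑ s, ∑ a, |π s a * hπocc s - π' s a * hπ'occ s| ≤
      (1 / (1 - γ)) *
        Finset.univ.sup' Finset.univ_nonempty
          (fun s => (1 / 2) * ∑ a, |π s a - π' s a|) := by
  obtain ⟨hγ0, hγ1⟩ := hγ
  have h1γ : (0:ℝ) < 1 - γ := by linarith
  set ε : ℝ := Finset.univ.sup' Finset.univ_nonempty
      (fun s => (1 / 2) * ∑ a, |π s a - π' s a|) with hε_def
  -- basic facts about ε
  have hε_s : ∀ s : S, ∑ a, |π s a - π' s a| ≤ 2 * ε := by
    intro s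
    have := Finset.le_sup' (fun s => (1 / 2) * ∑ a, |π s a - π' s a|) (Finset.mem_univ s)
    rw [← hε_def] at this
    linarith
  have hε0 : 0 ≤ ε := by
    obtain ⟨s⟩ := (inferInstance : Nonempty S)
    have h1 : (0:ℝ) ≤ (1 / 2) * ∑ a, |π s a - π' s a| := by
      positivity
    rw [hε_def]
    exact h1.trans (Finset.le_sup' (fun s => (1 / 2) * ∑ a, |π s a - π' s a|) (Finset.mem_univ s))
  -- stochasticity of Pπ, Pπ'
  have hP0 : ∀ s' s, 0 ≤ Pπ s' s := fun s' s => by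
    rw [hPπ]; exact Finset.sum_nonneg fun a _ => mul_nonneg (hT0 s a s') (hπ0 s a)
  have hP'0 : ∀ s' s, 0 ≤ Pπ' s' s := fun s' s => by
    rw [hPπ']; exact Finset.sum_nonneg fun a _ => mul_nonneg (hT0 s a s') (hπ'0 s a)
  have hPcol : ∀ s, ∑ s', Pπ s' s = 1 := by
    intro s
    simp only [hPπ]
    rw [Finset.sum_comm]
    have : ∀ a : A, ∑ s', T s a s' * π s a = π s a := by
      intro a; rw [← Finset.sum_mul, hT1, one_mul]
    rw [Finset.sum_congr rfl fun a _ => this a, hπ1]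
  have hP'col : ∀ s, ∑ s', Pπ' s' s = 1 := by
    intro s
    simp only [hPπ']
    rw [Finset.sum_comm]
    have : ∀ a : A, ∑ s', T s a s' * π' s a = π' s a := by
      intro a; rw [← Finset.sum_mul, hT1, one_mul]
    rw [Finset.sum_congr rfl fun a _ => this a, hπ'1]
  have hPdiff : ∀ s, ∑ s', |Pπ s' s - Pπ' s' s| ≤ 2 * ε := by
    intro s
    have h1 : ∀ s', |Pπ s' s - Pπ' s' s| ≤ ∑ a, T s a s' * |π s a - π' s a| := by
      intro s'
      rw [hPπ, hPπ', ← Finset.sum_sub_distrib]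
      refine (Finset.abs_sum_le_sum_abs _ _).trans (Finset.sum_le_sum fun a _ => ?_)
      rw [← mul_sub, abs_mul, abs_of_nonneg (hT0 s a s')]
    calc ∑ s', |Pπ s' s - Pπ' s' s| ≤ ∑ s', ∑ a, T s a s' * |π s a - π' s a| :=
          Finset.sum_le_sum fun s' _ => h1 s'
      _ = ∑ a, |π s a - π' s a| := by
          rw [Finset.sum_comm]
          exact Finset.sum_congr rfl fun a _ => by rw [← Finset.sum_mul, hT1, one_mul]
      _ ≤ 2 * ε := hε_s s
  -- occupancy iterates
  set f : ℕ → S → ℝ := fun t => (Pπ ^ t).mulVec h₀ with hf_def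
  set g : ℕ → S → ℝ := fun t => (Pπ' ^ t).mulVec h₀ with hg_def
  have hfsucc : ∀ t, f (t + 1) = Pπ.mulVec (f t) := by
    intro t; rw [hf_def]; simp only []
    rw [pow_succ', ← Matrix.mulVec_mulVec]
  have hgsucc : ∀ t, g (t + 1) = Pπ'.mulVec (g t) := by
    intro t; rw [hg_def]; simp only []
    rw [pow_succ', ← Matrix.mulVec_mulVec]
  have hf0 : ∀ t s, 0 ≤ f t s := by
    intro t
    induction t with
    | zero => intro s; simp [hf_def, Matrix.one_mulVec]; exact hh₀0 s
    | succ t ih =>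
        intro s
        rw [hfsucc t]
        exact Finset.sum_nonneg fun s'' _ => mul_nonneg (hP0 s s'') (ih s'')
  have hg0 : ∀ t s, 0 ≤ g t s := by
    intro t
    induction t with
    | zero => intro s; simp [hg_def, Matrix.one_mulVec]; exact hh₀0 s
    | succ t ih =>
        intro s
        rw [hgsucc t]
        exact Finset.sum_nonneg fun s'' _ => mul_nonneg (hP'0 s s'') (ih s'')
  have hf1 : ∀ t, ∑ s, f t s = 1 := by
    intro t
    induction t with
    | zero => simp [hf_def, Matrix.one_mulVec]; exact hh₀1
    | succ t ih =>
        rw [hfsucc t]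
        simp only [Matrix.mulVec, dotProduct]
        rw [Finset.sum_comm]
        calc ∑ s, ∑ s', Pπ s' s * f t s = ∑ s, f t s := by
              refine Finset.sum_congr rfl fun s _ => ?_
              rw [← Finset.sum_mul, hPcol s, one_mul]
          _ = 1 := ih
  have hg1 : ∀ t, ∑ s, g t s = 1 := by
    intro t
    induction t with
    | zero => simp [hg_def, Matrix.one_mulVec]; exact hh₀1
    | succ t ih =>
        rw [hgsucc t]
        simp only [Matrix.mulVec, dotProduct]
        rw [Finset.sum_comm]
        calc ∑ s, ∑ s', Pπ' s' s * g t s = ∑ s, g t s := by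
              refine Finset.sum_congr rfl fun s _ => ?_
              rw [← Finset.sum_mul, hP'col s, one_mul]
          _ = 1 := ih
  have hfg : ∀ t, ∑ s, |f t s - g t s| ≤ 2 * ε * t := by
    intro t
    induction t with
    | zero => simp [hf_def, hg_def]
    | succ t ih =>
        rw [hfsucc t, hgsucc t]
        have := l1_step_bound Pπ Pπ' hP0 hPcol (2 * ε) hPdiff (f t) (g t) (hg0 t) (hg1 t)
        push_cast
        calc ∑ s', |Pπ.mulVec (f t) s' - Pπ'.mulVec (g t) s'|
            ≤ (∑ s, |f t s - g t s|) + 2 * ε := this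
          _ ≤ 2 * ε * t + 2 * ε := by linarith
          _ = 2 * ε * (t + 1) := by ring
  have hfle1 : ∀ t s, f t s ≤ 1 := by
    intro t s
    calc f t s ≤ ∑ s', f t s' := Finset.single_le_sum (fun s' _ => hf0 t s') (Finset.mem_univ s)
      _ = 1 := hf1 t
  have hgle1 : ∀ t s, g t s ≤ 1 := by
    intro t s
    calc g t s ≤ ∑ s', g t s' := Finset.single_le_sum (fun s' _ => hg0 t s') (Finset.mem_univ s)
      _ = 1 := hg1 t
  -- summability facts
  have hgeom : Summable (fun t : ℕ => γ ^ t) := summable_geometric_of_lt_one hγ0 hγ1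
  have hgeom2 : Summable (fun t : ℕ => 2 * γ ^ t) := hgeom.mul_left 2
  have hsumf : ∀ s, Summable (fun t : ℕ => γ ^ t * f t s) := by
    intro s
    refine Summable.of_nonneg_of_le (fun t => mul_nonneg (pow_nonneg hγ0 t) (hf0 t s))
      (fun t => ?_) hgeom
    calc γ ^ t * f t s ≤ γ ^ t * 1 :=
          mul_le_mul_of_nonneg_left (hfle1 t s) (pow_nonneg hγ0 t)
      _ = γ ^ t := mul_one _
  have hsumg : ∀ s, Summable (fun t : ℕ => γ ^ t * g t s) := by
    intro s
    refine Summable.of_nonneg_of_le (fun t => mul_nonneg (pow_nonneg hγ0 t) (hg0 t s))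
      (fun t => ?_) hgeom
    calc γ ^ t * g t s ≤ γ ^ t * 1 :=
          mul_le_mul_of_nonneg_left (hgle1 t s) (pow_nonneg hγ0 t)
      _ = γ ^ t := mul_one _
  have habsle : ∀ s t, |γ ^ t * f t s - γ ^ t * g t s| ≤ 2 * γ ^ t := by
    intro s t
    rw [← mul_sub, abs_mul, abs_of_nonneg (pow_nonneg hγ0 t)]
    have : |f t s - g t s| ≤ 2 := by
      calc |f t s - g t s| ≤ |f t s| + |g t s| := abs_sub _ _
        _ ≤ 1 + 1 := add_le_add
            (by rw [abs_of_nonneg (hf0 t s)]; exact hfle1 t s)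
            (by rw [abs_of_nonneg (hg0 t s)]; exact hgle1 t s)
        _ = 2 := by norm_num
    calc γ ^ t * |f t s - g t s| ≤ γ ^ t * 2 :=
          mul_le_mul_of_nonneg_left this (pow_nonneg hγ0 t)
      _ = 2 * γ ^ t := by ring
  have hsumabs : ∀ s, Summable (fun t : ℕ => |γ ^ t * f t s - γ ^ t * g t s|) := by
    intro s
    exact Summable.of_nonneg_of_le (fun t => abs_nonneg _) (fun t => habsle s t) hgeom2
  -- total mass of hπocc
  have hocc_sum : ∑ s, hπocc s = 1 := by
    have hswap : ∑ s, ∑' t : ℕ, γ ^ t * f t s = ∑' t : ℕ, ∑ s, γ ^ t * f t s :=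
      (Summable.tsum_finsetSum (fun s _ => hsumf s)).symm
    calc ∑ s, hπocc s = (1 - γ) * ∑ s, ∑' t : ℕ, γ ^ t * f t s := by
          rw [Finset.mul_sum]; exact Finset.sum_congr rfl fun s _ => hocc s
      _ = (1 - γ) * ∑' t : ℕ, γ ^ t := by
          rw [hswap]
          congr 1
          refine tsum_congr fun t => ?_
          rw [← Finset.mul_sum, hf1 t, mul_one]
      _ = 1 := by
          rw [tsum_geometric_of_lt_one hγ0 hγ1]
          field_simp
  have hocc0 : ∀ s, 0 ≤ hπocc s := by
    intro s
    rw [hocc s]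
    exact mul_nonneg h1γ.le (tsum_nonneg fun t => mul_nonneg (pow_nonneg hγ0 t) (hf0 t s))
  -- TV distance between state occupancies
  have htγ : Summable (fun t : ℕ => (t:ℝ) * γ ^ t) := by
    have := summable_pow_mul_geometric_of_norm_lt_one 1 (r := γ) (by rwa [Real.norm_eq_abs, abs_of_nonneg hγ0])
    simpa using this
  have hstateTV : ∑ s, |hπocc s - hπ'occ s| ≤ 2 * ε * γ / (1 - γ) := by
    have hkey : ∀ s, |hπocc s - hπ'occ s| ≤
        (1 - γ) * ∑' t : ℕ, |γ ^ t * f t s - γ ^ t * g t s| := by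
      intro s
      rw [hocc s, hocc' s, ← mul_sub, abs_mul, abs_of_nonneg h1γ.le,
        ← Summable.tsum_sub (hsumf s) (hsumg s)]
      refine mul_le_mul_of_nonneg_left ?_ h1γ.le
      have := norm_tsum_le_tsum_norm
        (show Summable (fun t : ℕ => ‖γ ^ t * f t s - γ ^ t * g t s‖) by
          simpa [Real.norm_eq_abs] using hsumabs s)
      simpa [Real.norm_eq_abs] using this
    calc ∑ s, |hπocc s - hπ'occ s|
        ≤ ∑ s, (1 - γ) * ∑' t : ℕ, |γ ^ t * f t s - γ ^ t * g t s| :=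
          Finset.sum_le_sum fun s _ => hkey s
      _ = (1 - γ) * ∑' t : ℕ, ∑ s, |γ ^ t * f t s - γ ^ t * g t s| := by
          rw [← Finset.mul_sum, Summable.tsum_finsetSum (fun s _ => hsumabs s)]
      _ ≤ (1 - γ) * ∑' t : ℕ, 2 * ε * ((t:ℝ) * γ ^ t) := by
          refine mul_le_mul_of_nonneg_left ?_ h1γ.le
          refine Summable.tsum_le_tsum (fun t => ?_) (summable_sum (fun s _ => hsumabs s))
            (htγ.mul_left (2 * ε))
          have h1 : ∑ s, |γ ^ t * f t s - γ ^ t * g t s| = γ ^ t * ∑ s, |f t s - g t s| := by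
            rw [Finset.mul_sum]
            exact Finset.sum_congr rfl fun s _ => by rw [← mul_sub, abs_mul, abs_of_nonneg (pow_nonneg hγ0 t)]
          rw [h1]
          calc γ ^ t * ∑ s, |f t s - g t s| ≤ γ ^ t * (2 * ε * t) :=
                mul_le_mul_of_nonneg_left (hfg t) (pow_nonneg hγ0 t)
            _ = 2 * ε * ((t:ℝ) * γ ^ t) := by ring
      _ = (1 - γ) * (2 * ε) * (γ / (1 - γ) ^ 2) := by
          rw [tsum_mul_left, tsum_coe_mul_geometric_of_norm_lt_one
            (by rwa [Real.norm_eq_abs, abs_of_nonneg hγ0])]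
          ring
      _ = 2 * ε * γ / (1 - γ) := by
          field_simp
  -- final assembly
  have hinner : ∀ s, ∑ a, |π s a * hπocc s - π' s a * hπ'occ s| ≤
      2 * ε * hπocc s + |hπocc s - hπ'occ s| := by
    intro s
    have h1 : ∀ a, |π s a * hπocc s - π' s a * hπ'occ s| ≤
        |π s a - π' s a| * hπocc s + π' s a * |hπocc s - hπ'occ s| := by
      intro a
      have heq : π s a * hπocc s - π' s a * hπ'occ s =
          (π s a - π' s a) * hπocc s + π' s a * (hπocc s - hπ'occ s) := by ring
      rw [heq]
      refine (abs_add_le _ _).trans ?_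
      rw [abs_mul, abs_mul, abs_of_nonneg (hocc0 s), abs_of_nonneg (hπ'0 s a)]
    calc ∑ a, |π s a * hπocc s - π' s a * hπ'occ s|
        ≤ ∑ a, (|π s a - π' s a| * hπocc s + π' s a * |hπocc s - hπ'occ s|) :=
          Finset.sum_le_sum fun a _ => h1 a
      _ = (∑ a, |π s a - π' s a|) * hπocc s + |hπocc s - hπ'occ s| := by
          rw [Finset.sum_add_distrib, ← Finset.sum_mul, ← Finset.sum_mul, hπ'1, one_mul]
      _ ≤ 2 * ε * hπocc s + |hπocc s - hπ'occ s| :=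
          add_le_add (mul_le_mul_of_nonneg_right (hε_s s) (hocc0 s)) le_rfl
  have htotal : ∑ s, ∑ a, |π s a * hπocc s - π' s a * hπ'occ s| ≤
      2 * ε + 2 * ε * γ / (1 - γ) := by
    calc ∑ s, ∑ a, |π s a * hπocc s - π' s a * hπ'occ s|
        ≤ ∑ s, (2 * ε * hπocc s + |hπocc s - hπ'occ s|) :=
          Finset.sum_le_sum fun s _ => hinner s
      _ = 2 * ε * (∑ s, hπocc s) + ∑ s, |hπocc s - hπ'occ s| := by
          rw [Finset.sum_add_distrib, Finset.mul_sum]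
      _ ≤ 2 * ε + 2 * ε * γ / (1 - γ) := by
          rw [hocc_sum, mul_one]
          exact add_le_add le_rfl hstateTV
  have hfinal : (1 / 2 : ℝ) * (2 * ε + 2 * ε * γ / (1 - γ)) = (1 / (1 - γ)) * ε := by
    field_simp
    ring
  calc (1 / 2 : ℝ) * ∑ s, ∑ a, |π s a * hπocc s - π' s a * hπ'occ s|
      ≤ (1 / 2) * (2 * ε + 2 * ε * γ / (1 - γ)) := by linarith
    _ = (1 / (1 - γ)) * ε := hfinal
end

section
/- Let S and A be finite nonempty sets, let T : S × A × S → ℝ be a transition kernel, let π and π' be policies with induced transition matrices P_π and P_{π'}, let γ ∈ [0,1), let h₀ be a probability vector on S, and let r : S × A → ℝ satisfy |r(s,a)| ≤ R_max with R_max ≥ 0. Define V_π = (1/(1−γ))·Σ_{(s,a)} ρ_π(s,a)·r(s,a) and V_{π'} = (1/(1−γ))·Σ_{(s,a)} ρ_{π'}(s,a)·r(s,a), where ρ_π(s,a) = π(a|s)·h_π(s) and h_π = (1−γ)·Σ_{t=0}^∞ γ^t P_π^t h₀ (and analogously for π'). Then |V_π − V_{π'}| ≤ (2·R_max/(1−γ)^2)·max_{s∈S}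 D_TV(π(·|s), π'(·|s)). -/
open Finset

/-- ℓ¹ bound for matrix-vector multiplication. -/
lemma mulVec_abs_le {S : Type*} [Fintype S] (M : Matrix S S ℝ) (x : S → ℝ) :
    ∑ s, |M.mulVec x s| ≤ ∑ s', (∑ s, |M s s'|) * |x s'| := by
  calc ∑ s, |M.mulVec x s| ≤ ∑ s, ∑ s', |M s s' * x s'| :=
        Finset.sum_le_sum fun s _ => Finset.abs_sum_le_sum_abs _ _
    _ = ∑ s', ∑ s, |M s s'| * |x s'| := by
        rw [Finset.sum_comm]; simp [abs_mul]
    _ = ∑ s', (∑ s, |M s s'|) * |x s'| := by simp [Finset.sum_mul]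

/-- Properties of the discounted occupancy measure: nonnegativity, total mass 1,
and the fixed-point (Bellman flow) equation. -/
lemma occ_props {S : Type*} [Fintype S] [DecidableEq S] (P : Matrix S S ℝ) {γ : ℝ}
    (hγ0 : 0 ≤ γ) (hγ1 : γ < 1)
    (h₀ : S → ℝ) (hP0 : ∀ s s', 0 ≤ P s s') (hP1 : ∀ s', ∑ s, P s s' = 1)
    (hh0 : ∀ s, 0 ≤ h₀ s) (hh1 : ∑ s, h₀ s = 1)
    (h : S → ℝ) (hdef : ∀ s, h s = (1 - γ) * ∑' t : ℕ, γ ^ t * (P ^ t).mulVec h₀ s) :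
    (∀ s, 0 ≤ h s) ∧ (∑ s, h s = 1) ∧
      (∀ s, h s = (1 - γ) * h₀ s + γ * P.mulVec h s) := by
  have h1γ : 0 < 1 - γ := by linarith
  set v : ℕ → S → ℝ := fun t => (P ^ t).mulVec h₀ with hv
  have hv0 : v 0 = h₀ := by simp [hv]
  have hvsucc : ∀ t, v (t + 1) = P.mulVec (v t) := by
    intro t
    simp only [hv]
    rw [Matrix.mulVec_mulVec, ← pow_succ']
  have hvprob : ∀ t, (∀ s, 0 ≤ v t s) ∧ (∑ s, v t s = 1) := by
    intro t
    induction t with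
    | zero => exact ⟨by simpa [hv0] using hh0, by simpa [hv0] using hh1⟩
    | succ t ih =>
      constructor
      · intro s
        rw [hvsucc]
        exact Finset.sum_nonneg fun s' _ => mul_nonneg (hP0 s s') (ih.1 s')
      · have : ∑ s, P.mulVec (v t) s = ∑ s', v t s' := by
          unfold Matrix.mulVec
          simp only [dotProduct]
          rw [Finset.sum_comm]
          calc ∑ s', ∑ s, P s s' * v t s'
              = ∑ s', (∑ s, P s s') * v t s' := by simp [Finset.sum_mul]
            _ = ∑ s', v t s' := by simp [hP1]
        rw [hvsucc, this, ih.2]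
  have hvle1 : ∀ t s, v t s ≤ 1 := by
    intro t s
    have := Finset.single_le_sum (f := fun s => v t s)
      (fun s' _ => (hvprob t).1 s') (Finset.mem_univ s)
    rw [(hvprob t).2] at this
    exact this
  have hsum : ∀ s, Summable (fun t : ℕ => γ ^ t * v t s) := by
    intro s
    refine Summable.of_nonneg_of_le
      (fun t => mul_nonneg (pow_nonneg hγ0 t) ((hvprob t).1 s))
      (fun t => ?_) (summable_geometric_of_lt_one hγ0 hγ1)
    calc γ ^ t * v t s ≤ γ ^ t * 1 :=
          mul_le_mul_of_nonneg_left (hvle1 t s) (pow_nonneg hγ0 t)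
      _ = γ ^ t := mul_one _
  refine ⟨?_, ?_, ?_⟩
  · intro s
    rw [hdef s]
    exact mul_nonneg h1γ.le (tsum_nonneg fun t =>
      mul_nonneg (pow_nonneg hγ0 t) ((hvprob t).1 s))
  · calc ∑ s, h s = (1 - γ) * ∑ s, ∑' t : ℕ, γ ^ t * v t s := by
          rw [Finset.mul_sum]; exact Finset.sum_congr rfl fun s _ => hdef s
      _ = (1 - γ) * ∑' t : ℕ, ∑ s, γ ^ t * v t s := by
          rw [Summable.tsum_finsetSum fun s _ => hsum s]
      _ = (1 - γ) * ∑' t : ℕ, γ ^ t := by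
          congr 1
          refine tsum_congr fun t => ?_
          rw [← Finset.mul_sum, (hvprob t).2, mul_one]
      _ = 1 := by
          rw [tsum_geometric_of_lt_one hγ0 hγ1]
          field_simp
  · intro s
    set W : S → ℝ := fun s => ∑' t : ℕ, γ ^ t * v t s with hW
    have hhW : ∀ s, h s = (1 - γ) * W s := fun s => hdef s
    have key : W s = h₀ s + γ * ∑ s', P s s' * W s' := by
      have e1 : W s = γ ^ 0 * v 0 s + ∑' t : ℕ, γ ^ (t + 1) * v (t + 1) s :=
        Summable.tsum_eq_zero_add (hsum s)
      have e2 : ∀ t : ℕ, γ ^ (t + 1) * v (t + 1) s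
          = γ * ∑ s', P s s' * (γ ^ t * v t s') := by
        intro t
        rw [hvsucc t]
        unfold Matrix.mulVec
        simp only [dotProduct]
        rw [Finset.mul_sum, Finset.mul_sum]
        exact Finset.sum_congr rfl fun s' _ => by ring
      have e3 : ∑' t : ℕ, γ ^ (t + 1) * v (t + 1) s
          = γ * ∑ s', P s s' * W s' := by
        calc ∑' t : ℕ, γ ^ (t + 1) * v (t + 1) s
            = ∑' t : ℕ, γ * ∑ s', P s s' * (γ ^ t * v t s') := tsum_congr e2
          _ = γ * ∑' t : ℕ, ∑ s', P s s' * (γ ^ t * v t s') := tsum_mul_left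
          _ = γ * ∑ s', ∑' t : ℕ, P s s' * (γ ^ t * v t s') := by
              rw [Summable.tsum_finsetSum fun s' _ => (hsum s').mul_left (P s s')]
          _ = γ * ∑ s', P s s' * W s' := by
              congr 1
              exact Finset.sum_congr rfl fun s' _ => tsum_mul_left
      rw [e1, e3, hv0, pow_zero, one_mul]
    have hPmul : P.mulVec h s = (1 - γ) * ∑ s', P s s' * W s' := by
      unfold Matrix.mulVec
      simp only [dotProduct]
      rw [Finset.mul_sum]
      exact Finset.sum_congr rfl fun s' _ => by rw [hhW s']; ring
    rw [hhW s, key, hPmul]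
    ring

/-- The discounted values of two policies differ by at most
`(2 R_max/(1-γ)²) maxₛ D_TV(π(·|s), π'(·|s))`. -/
theorem value_difference_policy_bound {S A : Type*}
    [Fintype S] [Nonempty S] [DecidableEq S] [Fintype A] [Nonempty A]
    (T : S → A → S → ℝ)
    (hT0 : ∀ s a s', 0 ≤ T s a s')
    (hT1 : ∀ s a, ∑ s', T s a s' = 1)
    (π π' : S → A → ℝ)
    (hπ0 : ∀ s a, 0 ≤ π s a) (hπ1 : ∀ s, ∑ a, π s a = 1)
    (hπ'0 : ∀ s a, 0 ≤ π' s a) (hπ'1 : ∀ s, ∑ a, π' s a = 1)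
    (Pπ Pπ' : Matrix S S ℝ)
    (hPπ : ∀ s' s, Pπ s' s = ∑ a, T s a s' * π s a)
    (hPπ' : ∀ s' s, Pπ' s' s = ∑ a, T s a s' * π' s a)
    (γ : ℝ) (hγ : γ ∈ Set.Ico (0 : ℝ) 1)
    (h₀ : S → ℝ) (hh₀0 : ∀ s, 0 ≤ h₀ s) (hh₀1 : ∑ s, h₀ s = 1)
    (r : S → A → ℝ) (Rmax : ℝ) (hRmax : 0 ≤ Rmax)
    (hr : ∀ s a, |r s a| ≤ Rmax)
    (hπocc hπ'occ : S → ℝ)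
    (hocc : ∀ s, hπocc s = (1 - γ) * ∑' t : ℕ, γ ^ t * (Pπ ^ t).mulVec h₀ s)
    (hocc' : ∀ s, hπ'occ s = (1 - γ) * ∑' t : ℕ, γ ^ t * (Pπ' ^ t).mulVec h₀ s) :
    |(1 / (1 - γ)) * ∑ s, ∑ a, (π s a * hπocc s) * r s a -
        (1 / (1 - γ)) * ∑ s, ∑ a, (π' s a * hπ'occ s) * r s a| ≤
      (2 * Rmax / (1 - γ) ^ 2) *
        Finset.univ.sup' Finset.univ_nonempty
          (fun s => (1 / 2) * ∑ a, |π s a - π' s a|) := by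
  obtain ⟨hγ0, hγ1⟩ := hγ
  have h1γ : 0 < 1 - γ := by linarith
  set ε : ℝ := Finset.univ.sup' Finset.univ_nonempty
    (fun s => (1 / 2) * ∑ a, |π s a - π' s a|) with hε
  have hεge : ∀ s, ∑ a, |π s a - π' s a| ≤ 2 * ε := by
    intro s
    have := Finset.le_sup' (fun s => (1 / 2) * ∑ a, |π s a - π' s a|)
      (Finset.mem_univ s)
    rw [← hε] at this
    linarith
  have hε0 : 0 ≤ ε := by
    obtain ⟨s⟩ := ‹Nonempty S›
    have h1 : (0 : ℝ) ≤ (1 / 2) * ∑ a, |π s a - π' s a| :=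
      mul_nonneg (by norm_num) (Finset.sum_nonneg fun a _ => abs_nonneg _)
    have h2 := Finset.le_sup' (fun s => (1 / 2) * ∑ a, |π s a - π' s a|)
      (Finset.mem_univ s)
    rw [← hε] at h2
    linarith
  -- column-stochasticity of the induced matrices
  have hPπ0 : ∀ s' s, 0 ≤ Pπ s' s := fun s' s => by
    rw [hPπ]; exact Finset.sum_nonneg fun a _ => mul_nonneg (hT0 s a s') (hπ0 s a)
  have hPπ1 : ∀ s, ∑ s', Pπ s' s = 1 := by
    intro s
    calc ∑ s', Pπ s' s = ∑ s', ∑ a, T s a s' * π s a := by simp [hPπ]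
      _ = ∑ a, ∑ s', T s a s' * π s a := Finset.sum_comm
      _ = ∑ a, (∑ s', T s a s') * π s a := by simp [Finset.sum_mul]
      _ = 1 := by simp [hT1, hπ1]
  have hPπ'0 : ∀ s' s, 0 ≤ Pπ' s' s := fun s' s => by
    rw [hPπ']; exact Finset.sum_nonneg fun a _ => mul_nonneg (hT0 s a s') (hπ'0 s a)
  have hPπ'1 : ∀ s, ∑ s', Pπ' s' s = 1 := by
    intro s
    calc ∑ s', Pπ' s' s = ∑ s', ∑ a, T s a s' * π' s a := by simp [hPπ']
      _ = ∑ a, ∑ s', T s a s' * π' s a := Finset.sum_comm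
      _ = ∑ a, (∑ s', T s a s') * π' s a := by simp [Finset.sum_mul]
      _ = 1 := by simp [hT1, hπ'1]
  obtain ⟨hocc0, hocc1, hfix⟩ :=
    occ_props Pπ hγ0 hγ1 h₀ hPπ0 hPπ1 hh₀0 hh₀1 hπocc hocc
  obtain ⟨hocc'0, hocc'1, hfix'⟩ :=
    occ_props Pπ' hγ0 hγ1 h₀ hPπ'0 hPπ'1 hh₀0 hh₀1 hπ'occ hocc'
  -- columns of Pπ - Pπ' have ℓ¹ norm at most 2ε
  have hcol : ∀ s, ∑ s', |Pπ s' s - Pπ' s' s| ≤ 2 * ε := by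
    intro s
    calc ∑ s', |Pπ s' s - Pπ' s' s|
        = ∑ s', |∑ a, T s a s' * (π s a - π' s a)| := by
          refine Finset.sum_congr rfl fun s' _ => ?_
          rw [hPπ, hPπ', ← Finset.sum_sub_distrib]
          congr 1
          exact Finset.sum_congr rfl fun a _ => by ring
      _ ≤ ∑ s', ∑ a, |T s a s'| * |π s a - π' s a| := by
          refine Finset.sum_le_sum fun s' _ => ?_
          calc |∑ a, T s a s' * (π s a - π' s a)|
              ≤ ∑ a, |T s a s' * (π s a - π' s a)| :=
                Finset.abs_sum_le_sum_abs _ _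
            _ = ∑ a, |T s a s'| * |π s a - π' s a| := by simp [abs_mul]
      _ = ∑ a, (∑ s', T s a s') * |π s a - π' s a| := by
          rw [Finset.sum_comm]
          refine Finset.sum_congr rfl fun a _ => ?_
          rw [Finset.sum_mul]
          exact Finset.sum_congr rfl fun s' _ => by
            rw [abs_of_nonneg (hT0 s a s')]
      _ = ∑ a, |π s a - π' s a| := by simp [hT1]
      _ ≤ 2 * ε := hεge s
  -- ℓ¹ distance between the occupancies
  set D : ℝ := ∑ s, |hπocc s - hπ'occ s| with hD
  have hDbound : D ≤ 2 * γ * ε / (1 - γ) := by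
    have step : D ≤ γ * D + γ * (2 * ε) := by
      have hdiff : ∀ s, hπocc s - hπ'occ s
          = γ * (Pπ.mulVec (fun s' => hπocc s' - hπ'occ s') s
              + (Pπ - Pπ').mulVec hπ'occ s) := by
        intro s
        rw [hfix s, hfix' s]
        have e1 : Pπ.mulVec (fun s' => hπocc s' - hπ'occ s') s
            = Pπ.mulVec hπocc s - Pπ.mulVec hπ'occ s := by
          unfold Matrix.mulVec
          simp only [dotProduct]
          rw [← Finset.sum_sub_distrib]
          exact Finset.sum_congr rfl fun s' _ => by ring
        have e2 : (Pπ - Pπ').mulVec hπ'occ s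
            = Pπ.mulVec hπ'occ s - Pπ'.mulVec hπ'occ s := by
          unfold Matrix.mulVec
          simp only [dotProduct, Matrix.sub_apply]
          rw [← Finset.sum_sub_distrib]
          exact Finset.sum_congr rfl fun s' _ => by ring
        rw [e1, e2]
        ring
      have t1 : ∑ s, |Pπ.mulVec (fun s' => hπocc s' - hπ'occ s') s| ≤ D := by
        calc ∑ s, |Pπ.mulVec (fun s' => hπocc s' - hπ'occ s') s|
            ≤ ∑ s', (∑ s, |Pπ s s'|) * |hπocc s' - hπ'occ s'| :=
              mulVec_abs_le _ _
          _ = ∑ s', |hπocc s' - hπ'occ s'| := by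
              refine Finset.sum_congr rfl fun s' _ => ?_
              have : ∑ s, |Pπ s s'| = 1 := by
                rw [← hPπ1 s']
                exact Finset.sum_congr rfl fun s _ => abs_of_nonneg (hPπ0 s s')
              rw [this, one_mul]
          _ = D := rfl
      have t2 : ∑ s, |(Pπ - Pπ').mulVec hπ'occ s| ≤ 2 * ε := by
        calc ∑ s, |(Pπ - Pπ').mulVec hπ'occ s|
            ≤ ∑ s', (∑ s, |(Pπ - Pπ') s s'|) * |hπ'occ s'| := mulVec_abs_le _ _
          _ ≤ ∑ s', (2 * ε) * |hπ'occ s'| := by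
              refine Finset.sum_le_sum fun s' _ => ?_
              exact mul_le_mul_of_nonneg_right (by simpa using hcol s')
                (abs_nonneg _)
          _ = 2 * ε := by
              rw [← Finset.mul_sum]
              have : ∑ s', |hπ'occ s'| = 1 := by
                rw [← hocc'1]
                exact Finset.sum_congr rfl fun s' _ => abs_of_nonneg (hocc'0 s')
              rw [this, mul_one]
      calc D = ∑ s, |hπocc s - hπ'occ s| := rfl
        _ = ∑ s, |γ * (Pπ.mulVec (fun s' => hπocc s' - hπ'occ s') s
              + (Pπ - Pπ').mulVec hπ'occ s)| := by
            exact Finset.sum_congr rfl fun s _ => by rw [hdiff s]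
        _ ≤ ∑ s, γ * (|Pπ.mulVec (fun s' => hπocc s' - hπ'occ s') s|
              + |(Pπ - Pπ').mulVec hπ'occ s|) := by
            refine Finset.sum_le_sum fun s _ => ?_
            rw [abs_mul, abs_of_nonneg hγ0]
            exact mul_le_mul_of_nonneg_left (abs_add_le _ _) hγ0
        _ = γ * (∑ s, |Pπ.mulVec (fun s' => hπocc s' - hπ'occ s') s|
              + ∑ s, |(Pπ - Pπ').mulVec hπ'occ s|) := by
            rw [← Finset.mul_sum, Finset.sum_add_distrib]
        _ ≤ γ * (D + 2 * ε) := by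
            refine mul_le_mul_of_nonneg_left ?_ hγ0
            exact add_le_add t1 t2
        _ = γ * D + γ * (2 * ε) := by ring
    rw [le_div_iff₀ h1γ]
    nlinarith [step]
  -- total ℓ¹ distance between state-action occupancies
  have hρ : ∑ s, ∑ a, |π s a * hπocc s - π' s a * hπ'occ s| ≤ D + 2 * ε := by
    calc ∑ s, ∑ a, |π s a * hπocc s - π' s a * hπ'occ s|
        ≤ ∑ s, ∑ a, (π s a * |hπocc s - hπ'occ s|
            + |π s a - π' s a| * hπ'occ s) := by
          refine Finset.sum_le_sum fun s _ => Finset.sum_le_sum fun a _ => ?_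
          have : π s a * hπocc s - π' s a * hπ'occ s
              = π s a * (hπocc s - hπ'occ s) + (π s a - π' s a) * hπ'occ s := by
            ring
          rw [this]
          calc |π s a * (hπocc s - hπ'occ s) + (π s a - π' s a) * hπ'occ s|
              ≤ |π s a * (hπocc s - hπ'occ s)| + |(π s a - π' s a) * hπ'occ s| :=
                abs_add_le _ _
            _ = π s a * |hπocc s - hπ'occ s| + |π s a - π' s a| * hπ'occ s := by
                rw [abs_mul, abs_mul, abs_of_nonneg (hπ0 s a),
                  abs_of_nonneg (hocc'0 s)]
      _ = ∑ s, ((∑ a, π s a) * |hπocc s - hπ'occ s|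
            + (∑ a, |π s a - π' s a|) * hπ'occ s) := by
          refine Finset.sum_congr rfl fun s _ => ?_
          rw [Finset.sum_add_distrib, Finset.sum_mul, Finset.sum_mul]
      _ ≤ ∑ s, (|hπocc s - hπ'occ s| + (2 * ε) * hπ'occ s) := by
          refine Finset.sum_le_sum fun s _ => ?_
          rw [hπ1 s, one_mul]
          exact add_le_add le_rfl
            (mul_le_mul_of_nonneg_right (hεge s) (hocc'0 s))
      _ = D + 2 * ε := by
          rw [Finset.sum_add_distrib, ← Finset.mul_sum, hocc'1, mul_one]
  -- put everything together
  have main : |(1 / (1 - γ)) * ∑ s, ∑ a, (π s a * hπocc s) * r s a -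
      (1 / (1 - γ)) * ∑ s, ∑ a, (π' s a * hπ'occ s) * r s a|
      ≤ (1 / (1 - γ)) * (Rmax * (D + 2 * ε)) := by
    have e : (1 / (1 - γ)) * ∑ s, ∑ a, (π s a * hπocc s) * r s a -
        (1 / (1 - γ)) * ∑ s, ∑ a, (π' s a * hπ'occ s) * r s a
        = (1 / (1 - γ)) * ∑ s, ∑ a,
          (π s a * hπocc s - π' s a * hπ'occ s) * r s a := by
      rw [← mul_sub, ← Finset.sum_sub_distrib]
      congr 1
      refine Finset.sum_congr rfl fun s _ => ?_
      rw [← Finset.sum_sub_distrib]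
      exact Finset.sum_congr rfl fun a _ => by ring
    rw [e, abs_mul, abs_of_nonneg (by positivity : (0:ℝ) ≤ 1 / (1 - γ))]
    refine mul_le_mul_of_nonneg_left ?_ (by positivity)
    calc |∑ s, ∑ a, (π s a * hπocc s - π' s a * hπ'occ s) * r s a|
        ≤ ∑ s, |∑ a, (π s a * hπocc s - π' s a * hπ'occ s) * r s a| :=
          Finset.abs_sum_le_sum_abs _ _
      _ ≤ ∑ s, ∑ a, |π s a * hπocc s - π' s a * hπ'occ s| * |r s a| := by
          refine Finset.sum_le_sum fun s _ => ?_
          calc |∑ a, (π s a * hπocc s - π' s a * hπ'occ s) * r s a|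
              ≤ ∑ a, |(π s a * hπocc s - π' s a * hπ'occ s) * r s a| :=
                Finset.abs_sum_le_sum_abs _ _
            _ = ∑ a, |π s a * hπocc s - π' s a * hπ'occ s| * |r s a| := by
                simp [abs_mul]
      _ ≤ ∑ s, ∑ a, |π s a * hπocc s - π' s a * hπ'occ s| * Rmax := by
          refine Finset.sum_le_sum fun s _ => Finset.sum_le_sum fun a _ => ?_
          exact mul_le_mul_of_nonneg_left (hr s a) (abs_nonneg _)
      _ = (∑ s, ∑ a, |π s a * hπocc s - π' s a * hπ'occ s|) * Rmax := by
          rw [Finset.sum_mul]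
          exact Finset.sum_congr rfl fun s _ => by rw [Finset.sum_mul]
      _ ≤ (D + 2 * ε) * Rmax := mul_le_mul_of_nonneg_right hρ hRmax
      _ = Rmax * (D + 2 * ε) := by ring
  refine main.trans ?_
  have : (1 / (1 - γ)) * (Rmax * (D + 2 * ε))
      ≤ (1 / (1 - γ)) * (Rmax * (2 * γ * ε / (1 - γ) + 2 * ε)) := by
    refine mul_le_mul_of_nonneg_left ?_ (by positivity)
    refine mul_le_mul_of_nonneg_left ?_ hRmax
    linarith [hDbound]
  refine this.trans (le_of_eq ?_)
  field_simp
  ring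
end

section
/- Let S and A be finite nonempty sets, let T : S × A × S → ℝ be a transition kernel, let γ ∈ [0,1), let h₀ be a probability vector on S, and let r : S × A → ℝ satisfy |r(s,a)| ≤ R_max with R_max ≥ 0. Let p, p* : S → A → ℝ be functions with values in [0,1] and let m, m* : S → A → {0,1} be state-dependent causal masks. Suppose the masked functions π(a|s) = m(s,a)·p(s,a) and π*(a|s) = m*(s,a)·p*(s,a) are policies (i.e., Σ_{a} π(a|s) = 1 and Σ_a π*(a|s) = 1 for every s). Let V_π = (1/(1−γ))·Σ_{(s,a)} ρ_π(s,a)·r(s,a) and V_{π*} = (1/(1−γ))·Σ_{(s,a)} ρ_{π*}(s,a)·r(s,a) be the corresponding discounted values. Then V_{π*} − V_π ≤ (R_max/(1−γ)^2)·max_{s∈S} ( Σ_{a∈A} |m(s,a) − m*(s,a)| + card{a ∈ A : m(s,a) = 1 ∧ m*(s,a) = 1} ). -/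
open Finset

lemma cppg_mulVec_prob {S : Type*} [Fintype S] (M : Matrix S S ℝ)
    (h0 : ∀ i j, 0 ≤ M i j) (h1 : ∀ j, ∑ i, M i j = 1)
    (v : S → ℝ) (hv0 : ∀ i, 0 ≤ v i) (hv1 : ∑ i, v i = 1) :
    (∀ i, 0 ≤ M.mulVec v i) ∧ (∑ i, M.mulVec v i = 1) := by
  constructor
  · intro i
    exact Finset.sum_nonneg fun j _ => mul_nonneg (h0 i j) (hv0 j)
  · calc ∑ i, M.mulVec v i = ∑ i, ∑ j, M i j * v j := by
          simp [Matrix.mulVec, dotProduct]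
      _ = ∑ j, (∑ i, M i j) * v j := by
          rw [Finset.sum_comm]; simp [Finset.sum_mul]
      _ = ∑ j, v j := by simp only [h1, one_mul]
      _ = 1 := hv1

lemma cppg_pow_mulVec_prob {S : Type*} [Fintype S] [DecidableEq S] (M : Matrix S S ℝ)
    (h0 : ∀ i j, 0 ≤ M i j) (h1 : ∀ j, ∑ i, M i j = 1)
    (v : S → ℝ) (hv0 : ∀ i, 0 ≤ v i) (hv1 : ∑ i, v i = 1) (t : ℕ) :
    (∀ i, 0 ≤ (M ^ t).mulVec v i) ∧ (∑ i, (M ^ t).mulVec v i = 1) := by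
  induction t with
  | zero => simpa [Matrix.one_mulVec] using ⟨hv0, hv1⟩
  | succ n ih =>
    rw [pow_succ']
    have := cppg_mulVec_prob M h0 h1 ((M ^ n).mulVec v) ih.1 ih.2
    simpa [Matrix.mulVec_mulVec] using this

lemma cppg_occ_prob {S : Type*} [Fintype S] [DecidableEq S] {γ : ℝ}
    (hγ0 : 0 ≤ γ) (hγ1 : γ < 1) (M : Matrix S S ℝ)
    (h0 : ∀ i j, 0 ≤ M i j) (h1 : ∀ j, ∑ i, M i j = 1)
    (v : S → ℝ) (hv0 : ∀ i, 0 ≤ v i) (hv1 : ∑ i, v i = 1)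
    (occ : S → ℝ) (hocc : ∀ s, occ s = (1 - γ) * ∑' t : ℕ, γ ^ t * (M ^ t).mulVec v s) :
    (∀ s, 0 ≤ occ s) ∧ ∑ s, occ s = 1 := by
  have hγc : 0 < 1 - γ := by linarith
  have key : ∀ t : ℕ, (∀ i, 0 ≤ (M ^ t).mulVec v i) ∧ (∑ i, (M ^ t).mulVec v i = 1) :=
    cppg_pow_mulVec_prob M h0 h1 v hv0 hv1
  have hle1 : ∀ t (s : S), (M ^ t).mulVec v s ≤ 1 := by
    intro t s
    calc (M ^ t).mulVec v s ≤ ∑ i, (M ^ t).mulVec v i :=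
          Finset.single_le_sum (fun i _ => (key t).1 i) (Finset.mem_univ s)
      _ = 1 := (key t).2
  have hsummable : ∀ s : S, Summable (fun t : ℕ => γ ^ t * (M ^ t).mulVec v s) := by
    intro s
    apply Summable.of_nonneg_of_le
      (fun t => mul_nonneg (pow_nonneg hγ0 t) ((key t).1 s))
      (fun t => by
        calc γ ^ t * (M ^ t).mulVec v s ≤ γ ^ t * 1 :=
              mul_le_mul_of_nonneg_left (hle1 t s) (pow_nonneg hγ0 t)
          _ = γ ^ t := mul_one _)
    exact summable_geometric_of_lt_one hγ0 hγ1
  constructor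
  · intro s
    rw [hocc s]
    exact mul_nonneg (le_of_lt hγc)
      (tsum_nonneg fun t => mul_nonneg (pow_nonneg hγ0 t) ((key t).1 s))
  · calc ∑ s, occ s = (1 - γ) * ∑ s, ∑' t : ℕ, γ ^ t * (M ^ t).mulVec v s := by
          simp only [hocc]; rw [Finset.mul_sum]
      _ = (1 - γ) * ∑' t : ℕ, ∑ s, γ ^ t * (M ^ t).mulVec v s := by
          rw [Summable.tsum_finsetSum (fun s _ => hsummable s)]
      _ = (1 - γ) * ∑' t : ℕ, γ ^ t := by
          congr 1
          refine tsum_congr fun t => ?_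
          rw [← Finset.mul_sum, (key t).2, mul_one]
      _ = 1 := by
          rw [tsum_geometric_of_lt_one hγ0 hγ1]
          field_simp

lemma cppg_value_abs_le {S A : Type*} [Fintype S] [Fintype A]
    (π : S → A → ℝ) (hπ0 : ∀ s a, 0 ≤ π s a) (hπ1 : ∀ s, ∑ a, π s a = 1)
    (occ : S → ℝ) (hocc0 : ∀ s, 0 ≤ occ s) (hocc1 : ∑ s, occ s = 1)
    (r : S → A → ℝ) (Rmax : ℝ) (hRmax : 0 ≤ Rmax) (hr : ∀ s a, |r s a| ≤ Rmax) :
    |∑ s, ∑ a, (π s a * occ s) * r s a| ≤ Rmax := by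
  calc |∑ s, ∑ a, (π s a * occ s) * r s a| ≤ ∑ s, |∑ a, (π s a * occ s) * r s a| :=
        Finset.abs_sum_le_sum_abs _ _
    _ ≤ ∑ s, ∑ a, |(π s a * occ s) * r s a| :=
        Finset.sum_le_sum fun s _ => Finset.abs_sum_le_sum_abs _ _
    _ ≤ ∑ s, ∑ a, (π s a * occ s) * Rmax := by
        refine Finset.sum_le_sum fun s _ => Finset.sum_le_sum fun a _ => ?_
        rw [abs_mul, abs_of_nonneg (mul_nonneg (hπ0 s a) (hocc0 s))]
        exact mul_le_mul_of_nonneg_left (hr s a) (mul_nonneg (hπ0 s a) (hocc0 s))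
    _ = Rmax := by
        have : ∀ s : S, ∑ a, (π s a * occ s) * Rmax = occ s * Rmax := by
          intro s
          rw [← Finset.sum_mul]
          congr 1
          rw [← Finset.sum_mul, hπ1 s, one_mul]
        simp only [this]
        rw [← Finset.sum_mul, hocc1, one_mul]

lemma cppg_policy_eq {S A : Type*}
    [Fintype S] [Nonempty S] [DecidableEq S] [Fintype A] [Nonempty A]
    (p pstar : S → A → ℝ)
    (hp : ∀ s a, p s a ∈ Set.Icc (0 : ℝ) 1)
    (hpstar : ∀ s a, pstar s a ∈ Set.Icc (0 : ℝ) 1)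
    (m mstar : S → A → ℝ)
    (hm : ∀ s a, m s a = 0 ∨ m s a = 1)
    (hmstar : ∀ s a, mstar s a = 0 ∨ mstar s a = 1)
    (hπ1 : ∀ s, ∑ a, m s a * p s a = 1)
    (hπstar1 : ∀ s, ∑ a, mstar s a * pstar s a = 1)
    (s : S)
    (hfs : (∑ a, |m s a - mstar s a|) +
      (Nat.card {a : A // m s a = 1 ∧ mstar s a = 1} : ℝ) < 2) :
    ∀ a, m s a * p s a = mstar s a * pstar s a := by
  classical
  have hD0 : (0:ℝ) ≤ ∑ a, |m s a - mstar s a| :=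
    Finset.sum_nonneg fun a _ => abs_nonneg _
  -- existence of supported actions
  obtain ⟨a₀, -, ha₀⟩ : ∃ a ∈ Finset.univ, m s a * p s a ≠ 0 :=
    Finset.exists_ne_zero_of_sum_ne_zero (by rw [hπ1 s]; norm_num)
  obtain ⟨a₁, -, ha₁⟩ : ∃ a ∈ Finset.univ, mstar s a * pstar s a ≠ 0 :=
    Finset.exists_ne_zero_of_sum_ne_zero (by rw [hπstar1 s]; norm_num)
  have hma₀ : m s a₀ = 1 := by
    rcases hm s a₀ with h | h
    · exact absurd (by rw [h, zero_mul]) ha₀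
    · exact h
  have hma₁ : mstar s a₁ = 1 := by
    rcases hmstar s a₁ with h | h
    · exact absurd (by rw [h, zero_mul]) ha₁
    · exact h
  -- the overlap set is nonempty
  have hNE : Nonempty {a : A // m s a = 1 ∧ mstar s a = 1} := by
    by_contra hne
    rw [not_nonempty_iff] at hne
    have hnall : ∀ a : A, ¬(m s a = 1 ∧ mstar s a = 1) := fun a h => hne.elim ⟨a, h⟩
    have h₀' : mstar s a₀ = 0 := by
      rcases hmstar s a₀ with h | h
      · exact h
      · exact absurd ⟨hma₀, h⟩ (hnall a₀)
    have h₁' : m s a₁ = 0 := by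
      rcases hm s a₁ with h | h
      · exact h
      · exact absurd ⟨h, hma₁⟩ (hnall a₁)
    have hne01 : a₀ ≠ a₁ := by
      intro h; rw [h] at hma₀; rw [hma₀] at h₁'; norm_num at h₁'
    have h2le : (2:ℝ) ≤ ∑ a, |m s a - mstar s a| := by
      have := Finset.sum_le_sum_of_subset_of_nonneg
        (Finset.subset_univ ({a₀, a₁} : Finset A))
        (fun a _ _ => abs_nonneg (m s a - mstar s a))
      rw [Finset.sum_pair hne01, hma₀, h₀', hma₁, h₁'] at this
      norm_num at this
      linarith
    have hN0 : (0:ℝ) ≤ (Nat.card {a : A // m s a = 1 ∧ mstar s a = 1} : ℝ) :=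
      Nat.cast_nonneg _
    linarith
  have hN1 : 1 ≤ Nat.card {a : A // m s a = 1 ∧ mstar s a = 1} := Nat.card_pos
  have hN1' : (1:ℝ) ≤ (Nat.card {a : A // m s a = 1 ∧ mstar s a = 1} : ℝ) := by
    exact_mod_cast hN1
  -- all masks agree
  have hmm : ∀ a, m s a = mstar s a := by
    intro a
    by_contra hne
    have h1 : |m s a - mstar s a| = 1 := by
      rcases hm s a with h | h <;> rcases hmstar s a with h' | h' <;>
        simp_all
    have : (1:ℝ) ≤ ∑ a, |m s a - mstar s a| := by
      rw [← h1]
      exact Finset.single_le_sum (f := fun a => |m s a - mstar s a|)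
        (fun a _ => abs_nonneg _) (Finset.mem_univ a)
    linarith
  -- overlap has exactly one element
  have hNlt : Nat.card {a : A // m s a = 1 ∧ mstar s a = 1} < 2 := by
    by_contra hge
    push_neg at hge
    have : (2:ℝ) ≤ (Nat.card {a : A // m s a = 1 ∧ mstar s a = 1} : ℝ) := by
      exact_mod_cast hge
    linarith
  have hNeq : Nat.card {a : A // m s a = 1 ∧ mstar s a = 1} = 1 := by omega
  rw [Nat.card_eq_one_iff_unique] at hNeq
  obtain ⟨hsub, hne⟩ := hNeq
  obtain ⟨⟨a₂, ha₂⟩⟩ := hne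
  have huniq : ∀ a : A, m s a = 1 ∧ mstar s a = 1 → a = a₂ := by
    intro a h
    have := hsub.allEq ⟨a, h⟩ ⟨a₂, ha₂⟩
    exact congrArg Subtype.val this
  have honly : ∀ a, a ≠ a₂ → m s a = 0 := by
    intro a ha
    rcases hm s a with h | h
    · exact h
    · exact absurd (huniq a ⟨h, (hmm a) ▸ h⟩) ha
  have hpa₂ : p s a₂ = 1 := by
    have h := hπ1 s
    rw [Finset.sum_eq_single a₂ (fun b _ hb => by rw [honly b hb, zero_mul])
      (fun h => absurd (Finset.mem_univ a₂) h)] at h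
    rwa [ha₂.1, one_mul] at h
  have hpsa₂ : pstar s a₂ = 1 := by
    have h := hπstar1 s
    rw [Finset.sum_eq_single a₂ (fun b _ hb => by rw [← hmm b, honly b hb, zero_mul])
      (fun h => absurd (Finset.mem_univ a₂) h)] at h
    rwa [ha₂.2, one_mul] at h
  intro a
  by_cases ha : a = a₂
  · rw [ha, ha₂.1, ha₂.2, hpa₂, hpsa₂]
  · rw [honly a ha, ← hmm a, honly a ha, zero_mul, zero_mul]


/-- **Theorem 3 (performance guarantee).**
For the causal policies `π(a|s) = m(s,a) p(s,a)` and `π*(a|s) = m*(s,a) p*(s,a)`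
obtained from base policies via `{0,1}`-valued causal masks, the discounted values satisfy
`V_{π*} - V_π ≤ (R_max/(1-γ)²) maxₛ (‖m(s,·) - m*(s,·)‖₁ + #{a | m(s,a) = 1 ∧ m*(s,a) = 1})`. -/
theorem causal_policy_performance_guarantee {S A : Type*}
    [Fintype S] [Nonempty S] [DecidableEq S] [Fintype A] [Nonempty A]
    (T : S → A → S → ℝ)
    (hT0 : ∀ s a s', 0 ≤ T s a s')
    (hT1 : ∀ s a, ∑ s', T s a s' = 1)
    (γ : ℝ) (hγ : γ ∈ Set.Ico (0 : ℝ) 1)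
    (h₀ : S → ℝ) (hh₀0 : ∀ s, 0 ≤ h₀ s) (hh₀1 : ∑ s, h₀ s = 1)
    (r : S → A → ℝ) (Rmax : ℝ) (hRmax : 0 ≤ Rmax)
    (hr : ∀ s a, |r s a| ≤ Rmax)
    (p pstar : S → A → ℝ)
    (hp : ∀ s a, p s a ∈ Set.Icc (0 : ℝ) 1)
    (hpstar : ∀ s a, pstar s a ∈ Set.Icc (0 : ℝ) 1)
    (m mstar : S → A → ℝ)
    (hm : ∀ s a, m s a = 0 ∨ m s a = 1)
    (hmstar : ∀ s a, mstar s a = 0 ∨ mstar s a = 1)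
    -- the masked functions are policies
    (hπ1 : ∀ s, ∑ a, m s a * p s a = 1)
    (hπstar1 : ∀ s, ∑ a, mstar s a * pstar s a = 1)
    -- induced transition matrices
    (Pπ Pπstar : Matrix S S ℝ)
    (hPπ : ∀ s' s, Pπ s' s = ∑ a, T s a s' * (m s a * p s a))
    (hPπstar : ∀ s' s, Pπstar s' s = ∑ a, T s a s' * (mstar s a * pstar s a))
    -- discounted state occupancies
    (hπocc hπstarocc : S → ℝ)
    (hocc : ∀ s, hπocc s = (1 - γ) * ∑' t : ℕ, γ ^ t * (Pπ ^ t).mulVec h₀ s)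
    (hoccstar : ∀ s, hπstarocc s = (1 - γ) * ∑' t : ℕ, γ ^ t * (Pπstar ^ t).mulVec h₀ s) :
    (1 / (1 - γ)) * ∑ s, ∑ a, (mstar s a * pstar s a * hπstarocc s) * r s a -
        (1 / (1 - γ)) * ∑ s, ∑ a, (m s a * p s a * hπocc s) * r s a ≤
      (Rmax / (1 - γ) ^ 2) *
        Finset.univ.sup' Finset.univ_nonempty
          (fun s => (∑ a, |m s a - mstar s a|) +
            (Nat.card {a : A // m s a = 1 ∧ mstar s a = 1} : ℝ)) := by
  obtain ⟨hγ0, hγ1⟩ := hγ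
  have hγc : 0 < 1 - γ := by linarith
  set F : S → ℝ := fun s => (∑ a, |m s a - mstar s a|) +
      (Nat.card {a : A // m s a = 1 ∧ mstar s a = 1} : ℝ) with hF
  have hF0 : ∀ s, 0 ≤ F s := fun s =>
    add_nonneg (Finset.sum_nonneg fun a _ => abs_nonneg _) (Nat.cast_nonneg _)
  by_cases hcase : ∀ s, F s < 2
  · -- all states have small discrepancy: the two policies coincide
    have hpol : ∀ s a, m s a * p s a = mstar s a * pstar s a := fun s =>
      cppg_policy_eq p pstar hp hpstar m mstar hm hmstar hπ1 hπstar1 s (hcase s)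
    have hPeq : Pπ = Pπstar := by
      ext s' s
      rw [hPπ, hPπstar]
      exact Finset.sum_congr rfl fun a _ => by rw [hpol s a]
    have hocceq : ∀ s, hπstarocc s = hπocc s := fun s => by
      rw [hocc, hoccstar, hPeq]
    have hzero : (1 / (1 - γ)) * ∑ s, ∑ a, (mstar s a * pstar s a * hπstarocc s) * r s a -
        (1 / (1 - γ)) * ∑ s, ∑ a, (m s a * p s a * hπocc s) * r s a = 0 := by
      have : ∀ s a, mstar s a * pstar s a * hπstarocc s = m s a * p s a * hπocc s := by
        intro s a
        rw [hocceq s, hpol s a]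
      simp only [this]
      ring
    rw [hzero]
    have hsup : (0:ℝ) ≤ Finset.univ.sup' Finset.univ_nonempty F := by
      obtain ⟨s₀⟩ := (inferInstance : Nonempty S)
      exact le_trans (hF0 s₀) (Finset.le_sup' F (Finset.mem_univ s₀))
    positivity
  · -- some state has discrepancy at least 2: use the trivial value bound
    push_neg at hcase
    obtain ⟨s₀, hs₀⟩ := hcase
    have hsup2 : (2:ℝ) ≤ Finset.univ.sup' Finset.univ_nonempty F :=
      le_trans hs₀ (Finset.le_sup' F (Finset.mem_univ s₀))
    -- policy nonnegativity and row sums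
    have hm0 : ∀ s a, 0 ≤ m s a := fun s a => by
      rcases hm s a with h | h <;> rw [h] <;> norm_num
    have hmstar0 : ∀ s a, 0 ≤ mstar s a := fun s a => by
      rcases hmstar s a with h | h <;> rw [h] <;> norm_num
    have hπ0 : ∀ s a, 0 ≤ m s a * p s a := fun s a =>
      mul_nonneg (hm0 s a) (hp s a).1
    have hπstar0 : ∀ s a, 0 ≤ mstar s a * pstar s a := fun s a =>
      mul_nonneg (hmstar0 s a) (hpstar s a).1
    -- column-stochasticity of the transition matrices
    have hP0 : ∀ i j, 0 ≤ Pπ i j := fun i j => by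
      rw [hPπ]
      exact Finset.sum_nonneg fun a _ => mul_nonneg (hT0 j a i) (hπ0 j a)
    have hP1 : ∀ j, ∑ i, Pπ i j = 1 := by
      intro j
      simp only [hPπ]
      rw [Finset.sum_comm]
      calc ∑ a, ∑ i, T j a i * (m j a * p j a)
          = ∑ a, (∑ i, T j a i) * (m j a * p j a) := by
            simp [Finset.sum_mul]
        _ = ∑ a, m j a * p j a := by simp only [hT1, one_mul]
        _ = 1 := hπ1 j
    have hPstar0 : ∀ i j, 0 ≤ Pπstar i j := fun i j => by
      rw [hPπstar]
      exact Finset.sum_nonneg fun a _ => mul_nonneg (hT0 j a i) (hπstar0 j a)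
    have hPstar1 : ∀ j, ∑ i, Pπstar i j = 1 := by
      intro j
      simp only [hPπstar]
      rw [Finset.sum_comm]
      calc ∑ a, ∑ i, T j a i * (mstar j a * pstar j a)
          = ∑ a, (∑ i, T j a i) * (mstar j a * pstar j a) := by
            simp [Finset.sum_mul]
        _ = ∑ a, mstar j a * pstar j a := by simp only [hT1, one_mul]
        _ = 1 := hπstar1 j
    -- occupancies are probability vectors
    obtain ⟨hocc0, hocc1⟩ :=
      cppg_occ_prob hγ0 hγ1 Pπ hP0 hP1 h₀ hh₀0 hh₀1 hπocc hocc
    obtain ⟨hoccstar0, hoccstar1⟩ :=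
      cppg_occ_prob hγ0 hγ1 Pπstar hPstar0 hPstar1 h₀ hh₀0 hh₀1 hπstarocc hoccstar
    -- value bounds
    have hV : |∑ s, ∑ a, (m s a * p s a * hπocc s) * r s a| ≤ Rmax :=
      cppg_value_abs_le (fun s a => m s a * p s a) hπ0 hπ1 hπocc hocc0 hocc1 r Rmax hRmax hr
    have hVstar : |∑ s, ∑ a, (mstar s a * pstar s a * hπstarocc s) * r s a| ≤ Rmax :=
      cppg_value_abs_le (fun s a => mstar s a * pstar s a) hπstar0 hπstar1
        hπstarocc hoccstar0 hoccstar1 r Rmax hRmax hr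
    have hV1 := (abs_le.mp hV).1
    have hVstar2 := (abs_le.mp hVstar).2
    calc (1 / (1 - γ)) * ∑ s, ∑ a, (mstar s a * pstar s a * hπstarocc s) * r s a -
          (1 / (1 - γ)) * ∑ s, ∑ a, (m s a * p s a * hπocc s) * r s a
        ≤ (1 / (1 - γ)) * Rmax - (1 / (1 - γ)) * (-Rmax) := by
          have h1 : 0 < 1 / (1 - γ) := by positivity
          have := mul_le_mul_of_nonneg_left hVstar2 (le_of_lt h1)
          have := mul_le_mul_of_nonneg_left hV1 (le_of_lt h1)
          nlinarith
      _ = 2 * Rmax / (1 - γ) := by ring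
      _ ≤ 2 * Rmax / (1 - γ) ^ 2 :=
          div_le_div_of_nonneg_left (by linarith) (by positivity) (by nlinarith)
      _ = (Rmax / (1 - γ) ^ 2) * 2 := by ring
      _ ≤ (Rmax / (1 - γ) ^ 2) * Finset.univ.sup' Finset.univ_nonempty F := by
          apply mul_le_mul_of_nonneg_left hsup2
          positivity
end
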